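/- Let n > 2 be odd, k ≥ 1, and suppose c ∈ GF(2^k) with Tr_k(c) = 1. For a ∈ GF(2^{nk}) with v ≠ c and A_a(v) = 0, set b = a·(v/(v+c))^{2^k+1}. Then A_b(v + c) = 0, where A_a(x) = a^{2^k} x^{2^{2k}} + x^{2^k} + a x + c. -/

import Mathlib

theorem stmt13 (n k : ℕ) (hn : 2 < n) (hodd : Odd n) (hk : 1 ≤ k)
    (F : Type*) [Field F] [Fintype F] (hF : Fintype.card F = 2 ^ (n * k))
    (c : F) (hc : c ^ (2 ^ k) = c)
    (htr : ∑ i ∈ Finset.range k, c ^ (2 ^ i) = 1)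
    (a v : F) (hv : v ≠ c)
    (hroot : a ^ (2 ^ k) * v ^ (2 ^ (2 * k)) + v ^ (2 ^ k) + a * v + c = 0) :
    (a * (v / (v + c)) ^ (2 ^ k + 1)) ^ (2 ^ k) * (v + c) ^ (2 ^ (2 * k)) +
        (v + c) ^ (2 ^ k) + (a * (v / (v + c)) ^ (2 ^ k + 1)) * (v + c) + c = 0 := by
  -- characteristic 2
  have hp2 : CharP F 2 := by
    obtain ⟨m, hp, hcard⟩ := FiniteField.card F (ringChar F)
    have hdvd : ringChar F ∣ 2 := by
      refine hp.dvd_of_dvd_pow (n := n * k) ?_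
      rw [← hF, hcard]
      exact dvd_pow_self _ (by positivity)
    have : ringChar F = 2 :=
      (Nat.prime_dvd_prime_iff_eq hp Nat.prime_two).mp hdvd
    rw [← this]; exact ringChar.charP F
  haveI := hp2
  haveI : Fact (Nat.Prime 2) := ⟨Nat.prime_two⟩
  have h2 : (2 : F) = 0 := CharTwo.two_eq_zero
  have hfrob : ∀ x y : F, (x + y) ^ (2 ^ k) = x ^ (2 ^ k) + y ^ (2 ^ k) :=
    fun x y => add_pow_char_pow x y 2 k
  have hu : v + c ≠ 0 := by
    intro h
    apply hv
    have h' : v = -c := eq_neg_of_add_eq_zero_left h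
    rwa [CharTwo.neg_eq] at h'
  have hq2 : ∀ x : F, x ^ (2 ^ (2 * k)) = (x ^ (2 ^ k)) ^ (2 ^ k) := fun x => by
    rw [two_mul, pow_add, pow_mul]
  have hUq : (v + c) ^ (2 ^ k) = v ^ (2 ^ k) + c := by rw [hfrob, hc]
  have hUq2 : (v + c) ^ (2 ^ (2 * k)) = (v ^ (2 ^ k)) ^ (2 ^ k) + c := by
    rw [hq2, hUq, hfrob, hc]
  have hV : v ^ (2 ^ k) + c ≠ 0 := by rw [← hUq]; exact pow_ne_zero _ hu
  have hW : (v ^ (2 ^ k)) ^ (2 ^ k) + c ≠ 0 := by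
    rw [← hc, ← hfrob]
    exact pow_ne_zero _ hV
  have key : a ^ (2 ^ k) * (v ^ (2 ^ k)) ^ (2 ^ k) = v ^ (2 ^ k) + a * v + c := by
    rw [hq2] at hroot
    linear_combination hroot - (v ^ (2 ^ k) + a * v + c) * h2
  have hb : (a * (v / (v + c)) ^ (2 ^ k + 1)) ^ (2 ^ k)
      = a ^ (2 ^ k) * (v ^ (2 ^ k) / (v ^ (2 ^ k) + c)) ^ (2 ^ k + 1) := by
    rw [mul_pow, ← pow_mul, mul_comm (2 ^ k + 1), pow_mul, div_pow, hUq]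
  rw [hb, hUq2, hUq, div_pow, div_pow, pow_succ, pow_succ, pow_succ, pow_succ,
    hUq, hfrob, hc]
  field_simp
  linear_combination v ^ (2^k) * key +
    ((v ^ (2^k))^2 + a * v ^ (2^k) * v + 2 * v ^ (2^k) * c + c^2) * h2
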